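/- arXiv:1803.11423 — 2 statements merged into one kernel-verified Lean document; each statement's English description precedes it below -/
import Mathlib

section
/- If G is a generalized geodetic graph (i.e., g(G) = sg(G)), then for every connected graph H, sg(G □ H) ≥ sg(G). -/
open SimpleGraph

/-- A choice of one fixed shortest path (geodesic) between each pair of vertices,
symmetric in the sense that the path from `v` to `u` is the reverse of the one
from `u` to `v`. -/
def StrongGeodeticChoice {V : Type*} (G : SimpleGraph V) (p : ∀ u v : V, G.Walk u v) : Prop :=
  ∀ u v : V, (p u v).IsPath ∧ (p u v).length = G.dist u v ∧ p v u = (p u v).reverse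

/-- `S` is a strong geodetic set of `G`: one can fix one shortest path between each
pair of vertices of `S` so that every vertex of `G` lies on some fixed path. -/
def IsStrongGeodeticSet {V : Type*} (G : SimpleGraph V) (S : Set V) : Prop :=
  ∃ p : ∀ u v : V, G.Walk u v, StrongGeodeticChoice G p ∧
    ∀ w : V, ∃ u ∈ S, ∃ v ∈ S, w ∈ (p u v).support

/-- The strong geodetic number of `G`. -/
noncomputable def sg {V : Type*} (G : SimpleGraph V) : ℕ :=
  sInf {n | ∃ S : Set V, S.ncard = n ∧ IsStrongGeodeticSet G S}

/-- The strong geodetic core number of `G`: the minimum, over minimum strong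
geodetic sets `S` together with a choice of fixed geodesics witnessing them,
of the size of a subset `X ⊆ S` such that the fixed paths with an endpoint in `X`
already cover all vertices. -/
noncomputable def sgc {V : Type*} (G : SimpleGraph V) : ℕ :=
  sInf {k | ∃ (S X : Set V) (p : ∀ u v : V, G.Walk u v),
    StrongGeodeticChoice G p ∧ S.ncard = sg G ∧
    (∀ w : V, ∃ u ∈ S, ∃ v ∈ S, w ∈ (p u v).support) ∧
    X ⊆ S ∧ X.ncard = k ∧
    (∀ w : V, ∃ u ∈ X, ∃ v ∈ S, w ∈ (p u v).support)}

/-- `A` is a geodetic set: every vertex lies on some shortest path between two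
vertices of `A`. -/
def IsGeodeticSet {V : Type*} (G : SimpleGraph V) (A : Set V) : Prop :=
  ∀ w : V, ∃ u ∈ A, ∃ v ∈ A, ∃ q : G.Walk u v, q.length = G.dist u v ∧ w ∈ q.support

/-- The geodetic number of `G`. -/
noncomputable def geodeticNumber {V : Type*} (G : SimpleGraph V) : ℕ :=
  sInf {n | ∃ A : Set V, A.ncard = n ∧ IsGeodeticSet G A}

section Aux

variable {α β : Type*} {G : SimpleGraph α} {H : SimpleGraph β}

/-- Projection of a walk in the box product onto the first factor. -/
def projL [DecidableEq β] : ∀ {x y : α × β}, (G □ H).Walk x y → G.Walk x.1 y.1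
  | _, _, .nil => .nil
  | x, _, @SimpleGraph.Walk.cons _ _ _ z _ h w =>
    if h2 : x.2 = z.2 then
      (projL w).cons (by
        rcases h with ⟨hg, _⟩ | ⟨hh, _⟩
        · exact hg
        · exact absurd (h2 ▸ hh) (H.irrefl))
    else
      (projL w).copy (by
        rcases h with ⟨_, he⟩ | ⟨_, he⟩
        · exact absurd he h2
        · exact he.symm) rfl

/-- Projection of a walk in the box product onto the second factor. -/
def projR [DecidableEq β] : ∀ {x y : α × β}, (G □ H).Walk x y → H.Walk x.2 y.2
  | _, _, .nil => .nil
  | x, _, @SimpleGraph.Walk.cons _ _ _ z _ h w =>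
    if h2 : x.2 = z.2 then
      (projR w).copy h2.symm rfl
    else
      (projR w).cons (by
        rcases h with ⟨_, he⟩ | ⟨hh, _⟩
        · exact absurd he h2
        · exact hh)

lemma length_projL_add_projR [DecidableEq β] :
    ∀ {x y : α × β} (w : (G □ H).Walk x y),
      (projL w).length + (projR w).length = w.length := by
  intro x y w
  induction w with
  | nil => rfl
  | @cons x z y h w ih =>
    by_cases h2 : x.2 = z.2
    · rw [projL, projR, dif_pos h2, dif_pos h2]
      simp only [SimpleGraph.Walk.length_cons, SimpleGraph.Walk.length_copy]
      omega
    · rw [projL, projR, dif_neg h2, dif_neg h2]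
      simp only [SimpleGraph.Walk.length_cons, SimpleGraph.Walk.length_copy]
      omega

lemma fst_mem_support_projL [DecidableEq β] :
    ∀ {x y : α × β} (w : (G □ H).Walk x y) (a : α × β),
      a ∈ w.support → a.1 ∈ (projL w).support := by
  intro x y w
  induction w with
  | nil =>
    intro a ha
    simp only [SimpleGraph.Walk.support_nil, List.mem_singleton] at ha
    subst ha
    simp [projL]
  | @cons x z y h w ih =>
    intro a ha
    simp only [SimpleGraph.Walk.support_cons, List.mem_cons] at ha
    by_cases h2 : x.2 = z.2
    · rw [projL, dif_pos h2]
      simp only [SimpleGraph.Walk.support_cons, List.mem_cons]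
      rcases ha with rfl | ha
      · exact Or.inl rfl
      · exact Or.inr (ih a ha)
    · rw [projL, dif_neg h2, SimpleGraph.Walk.support_copy]
      rcases ha with rfl | ha
      · have he : a.1 = z.1 := by
          rcases h with ⟨_, he⟩ | ⟨_, he⟩
          · exact absurd he h2
          · exact he
        rw [he]
        exact SimpleGraph.Walk.start_mem_support _
      · exact ih a ha

lemma boxProd_dist_le (hG : G.Connected) (hH : H.Connected) (u v : α) (a b : β) :
    (G □ H).dist (u, a) (v, b) ≤ G.dist u v + H.dist a b := by
  obtain ⟨wG, hwG⟩ := (hG u v).exists_walk_length_eq_dist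
  obtain ⟨wH, hwH⟩ := (hH a b).exists_walk_length_eq_dist
  have := SimpleGraph.dist_le ((wG.boxProdLeft H a).append (wH.boxProdRight G v))
  have e1 : (wG.boxProdLeft H a).length = wG.length := SimpleGraph.Walk.length_map _ _
  have e2 : (wH.boxProdRight G v).length = wH.length := SimpleGraph.Walk.length_map _ _
  rw [SimpleGraph.Walk.length_append, e1, e2] at this
  simpa [SimpleGraph.Walk.length_append, SimpleGraph.Walk.boxProdLeft,
    SimpleGraph.Walk.boxProdRight, SimpleGraph.Walk.length_map, hwG, hwH] using this

/-- The key lemma: a geodesic in the box product projects to a geodesic in `G`. -/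
lemma exists_geodesic_proj [DecidableEq β] (hG : G.Connected) (hH : H.Connected)
    {x y : α × β} (p : (G □ H).Walk x y) (hp : p.length = (G □ H).dist x y) :
    ∃ q : G.Walk x.1 y.1, q.length = G.dist x.1 y.1 ∧ ∀ a ∈ p.support, a.1 ∈ q.support := by
  refine ⟨projL p, ?_, fun a ha => fst_mem_support_projL p a ha⟩
  have h1 : G.dist x.1 y.1 ≤ (projL p).length := SimpleGraph.dist_le _
  have h2 : H.dist x.2 y.2 ≤ (projR p).length := SimpleGraph.dist_le _
  have h3 := length_projL_add_projR p
  have h4 : (G □ H).dist x y ≤ G.dist x.1 y.1 + H.dist x.2 y.2 := by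
    simpa using boxProd_dist_le hG hH x.1 y.1 x.2 y.2
  omega

/-- Every connected graph admits a symmetric choice of geodesics. -/
lemma exists_strongGeodeticChoice {V : Type*} (G : SimpleGraph V) (hG : G.Connected) :
    ∃ p : ∀ u v : V, G.Walk u v, StrongGeodeticChoice G p := by
  classical
  letI : LinearOrder V := IsWellOrder.linearOrder WellOrderingRel
  have hq : ∀ u v : V, ∃ w : G.Walk u v, w.length = G.dist u v := fun u v =>
    (hG u v).exists_walk_length_eq_dist
  choose q hq using hq
  refine ⟨fun u v => if u ≤ v then q u v else (q v u).reverse, fun u v => ?_⟩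
  have hpath : ∀ u v : V, (q u v).IsPath := fun u v =>
    SimpleGraph.Walk.isPath_of_length_eq_dist _ (hq u v)
  have hnil : ∀ u : V, q u u = SimpleGraph.Walk.nil := fun u => by
    have : (q u u).length = 0 := by rw [hq]; exact SimpleGraph.dist_self
    exact SimpleGraph.Walk.nil_iff_eq_nil.mp (SimpleGraph.Walk.length_eq_zero_iff.mp this)
  refine ⟨?_, ?_, ?_⟩
  · dsimp only
    by_cases h : u ≤ v
    · rw [if_pos h]; exact hpath u v
    · rw [if_neg h]; exact (hpath v u).reverse
  · dsimp only
    by_cases h : u ≤ v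
    · rw [if_pos h]; exact hq u v
    · rw [if_neg h, SimpleGraph.Walk.length_reverse, hq, SimpleGraph.dist_comm]
  · dsimp only
    rcases lt_trichotomy u v with h | rfl | h
    · rw [if_pos h.le, if_neg (not_le.mpr h)]
    · simp only [le_refl, if_true, hnil, SimpleGraph.Walk.reverse_nil]
    · rw [if_pos h.le, if_neg (not_le.mpr h), SimpleGraph.Walk.reverse_reverse]

end Aux

theorem stmt13 {V W : Type*} [Fintype V] [Fintype W]
    (G : SimpleGraph V) (hG : G.Connected) (hgen : geodeticNumber G = sg G)
    (H : SimpleGraph W) (hH : H.Connected) :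
    sg (G □ H) ≥ sg G := by
  classical
  have hne : {n | ∃ S : Set (V × W), S.ncard = n ∧ IsStrongGeodeticSet (G □ H) S}.Nonempty := by
    obtain ⟨p, hp⟩ := exists_strongGeodeticChoice _ (hG.boxProd hH)
    exact ⟨(Set.univ : Set (V × W)).ncard, Set.univ, rfl, p, hp,
      fun w => ⟨w, trivial, w, trivial, SimpleGraph.Walk.start_mem_support _⟩⟩
  rw [ge_iff_le, sg]
  refine le_csInf hne ?_
  rintro n ⟨S, rfl, p, hchoice, hcover⟩
  have hA : IsGeodeticSet G (Prod.fst '' S) := by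
    intro w0
    obtain ⟨b⟩ := hH.nonempty
    obtain ⟨u, hu, v, hv, hmem⟩ := hcover (w0, b)
    obtain ⟨q, hq, hsup⟩ := exists_geodesic_proj hG hH (p u v) ((hchoice u v).2.1)
    exact ⟨u.1, ⟨u, hu, rfl⟩, v.1, ⟨v, hv, rfl⟩, q, hq, hsup _ hmem⟩
  calc sg G = geodeticNumber G := hgen.symm
    _ ≤ (Prod.fst '' S).ncard := Nat.sInf_le ⟨_, rfl, hA⟩
    _ ≤ S.ncard := Set.ncard_image_le S.toFinite
end

section
/- Let T be a tree and G a connected graph with 2·n(G) ≤ ℓ(T), where ℓ(T) is the number of leaves of T. Then sg(T □ G) = sg(T) = ℓ(T). -/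
open SimpleGraph

section TreeAux
variable {V : Type*} {G : SimpleGraph V}


/-- Any path in a tree is THE path. -/
lemma tree_path_unique (hT : G.IsTree) {u v : V} {p q : G.Walk u v}
    (hp : p.IsPath) (hq : q.IsPath) : p = q :=
  ((hT.existsUnique_path u v).unique hp hq)

noncomputable def tpath (hT : G.IsTree) (u v : V) : G.Walk u v :=
  (hT.existsUnique_path u v).exists.choose

lemma tpath_isPath (hT : G.IsTree) (u v : V) : (tpath hT u v).IsPath :=
  (hT.existsUnique_path u v).exists.choose_spec

lemma tpath_eq (hT : G.IsTree) {u v : V} {p : G.Walk u v} (hp : p.IsPath) :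
    p = tpath hT u v := tree_path_unique hT hp (tpath_isPath hT u v)

lemma tpath_length (hT : G.IsTree) (u v : V) : (tpath hT u v).length = G.dist u v := by
  obtain ⟨p, hp, hl⟩ := hT.isConnected.exists_path_of_dist u v
  rw [tpath_eq hT hp] at hl
  exact hl

lemma tpath_reverse (hT : G.IsTree) (u v : V) :
    tpath hT v u = (tpath hT u v).reverse :=
  (tpath_eq hT (tpath_isPath hT u v).reverse).symm

lemma tpath_support_subset [DecidableEq V] (hT : G.IsTree) {u v : V} (w : G.Walk u v) :
    (tpath hT u v).support ⊆ w.support := by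
  rw [← tpath_eq hT w.bypass_isPath]
  exact w.support_bypass_subset

lemma tpath_median [DecidableEq V] (hT : G.IsTree) {u v x : V} (c : V)
    (hx : x ∈ (tpath hT u v).support) :
    x ∈ (tpath hT u c).support ∨ x ∈ (tpath hT c v).support := by
  have := tpath_support_subset hT ((tpath hT u c).append (tpath hT c v)) hx
  rwa [SimpleGraph.Walk.mem_support_append_iff] at this

lemma leaf_not_between [Fintype V] [DecidableRel G.Adj] (hc : G.Connected) {l x y : V}
    (hl : G.degree l = 1) (hx : x ≠ l) (hy : y ≠ l)
    (h : G.dist x y = G.dist x l + G.dist l y) : False := by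
  obtain ⟨p, hp, hpl⟩ := hc.exists_path_of_dist x l
  obtain ⟨q, hq, hql⟩ := hc.exists_path_of_dist l y
  have hpl' : p.reverse.length = G.dist x l := by simpa using hpl
  have hdx : 0 < G.dist x l := hc.pos_dist_of_ne hx
  have hdy : 0 < G.dist l y := hc.pos_dist_of_ne (Ne.symm hy)
  cases hP : p.reverse with
  | nil => rw [hP] at hpl'; simp at hpl'; omega
  | cons h1 p1 =>
    cases q with
    | nil => simp at hql; omega
    | cons h2 q1 =>
      rename_i z1 z2
      by_cases hz : z1 = z2
      · subst hz
        have hle := G.dist_le (p1.reverse.append q1)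
        rw [Walk.length_append, Walk.length_reverse] at hle
        have l1 : p1.length = G.dist x l - 1 := by
          rw [hP] at hpl'; simp at hpl'; omega
        have l2 : q1.length = G.dist l y - 1 := by
          simp at hql; omega
        omega
      · have : 1 < G.degree l := by
          rw [← card_neighborFinset_eq_degree]
          exact Finset.one_lt_card.2 ⟨z1, by simpa using h1, z2, by simpa using h2, hz⟩
        omega

lemma leaf_mem_geodesic_endpoint [Fintype V] [DecidableRel G.Adj] [DecidableEq V]
    (hc : G.Connected) {l x y : V}
    (hl : G.degree l = 1) {p : G.Walk x y} (hlen : p.length = G.dist x y)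
    (hmem : l ∈ p.support) : l = x ∨ l = y := by
  by_contra hcon
  push_neg at hcon
  obtain ⟨hx, hy⟩ := hcon
  have hsplit := p.take_spec hmem
  have h1 := G.dist_le (p.takeUntil l hmem)
  have h2 := G.dist_le (p.dropUntil l hmem)
  have h3 : (p.takeUntil l hmem).length + (p.dropUntil l hmem).length = p.length := by
    rw [← Walk.length_append, hsplit]
  have htri := hc.dist_triangle (u := x) (v := l) (w := y)
  exact leaf_not_between hc hl (Ne.symm hx) (Ne.symm hy) (by omega)

lemma extend_to_leaves [Fintype V] [DecidableRel G.Adj] [DecidableEq V]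
    (hT : G.IsTree) (h2 : 2 ≤ Fintype.card V)
    (hext : ∀ {u v : V} (p : G.Walk u v), p.IsPath → G.degree u ≠ 1 →
      ∃ z, ∃ _ : G.Adj z u, z ∉ p.support) :
    ∀ (k : ℕ) {u v : V} (p : G.Walk u v), p.IsPath → Fintype.card V - p.length ≤ k →
    ∃ a b, ∃ q : G.Walk a b, q.IsPath ∧ G.degree a = 1 ∧ G.degree b = 1 ∧
      ∀ x ∈ p.support, x ∈ q.support := by
  intro k
  induction k with
  | zero =>
    intro u v p hp hk
    have := hp.length_lt
    omega
  | succ k ih =>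
    intro u v p hp hk
    by_cases hu : G.degree u = 1
    · by_cases hv : G.degree v = 1
      · exact ⟨u, v, p, hp, hu, hv, fun x hx => hx⟩
      · -- extend at v using reverse
        obtain ⟨z, hadj, hz⟩ := hext p.reverse hp.reverse hv
        have hp' : (Walk.cons hadj p.reverse).reverse.IsPath := by
          apply Walk.IsPath.reverse
          rw [Walk.cons_isPath_iff]
          exact ⟨hp.reverse, hz⟩
        have hlen : (Walk.cons hadj p.reverse).reverse.length = p.length + 1 := by
          simp
        obtain ⟨a, b, q, hq, ha, hb, hsub⟩ := ih _ hp' (by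
          have := hp.length_lt
          omega)
        refine ⟨a, b, q, hq, ha, hb, fun x hx => hsub x ?_⟩
        simp only [Walk.support_reverse, List.mem_reverse, Walk.support_cons, List.mem_cons]
        right
        simpa using hx
    · obtain ⟨z, hadj, hz⟩ := hext p hp hu
      have hp' : (Walk.cons hadj p).IsPath := by
        rw [Walk.cons_isPath_iff]; exact ⟨hp, hz⟩
      obtain ⟨a, b, q, hq, ha, hb, hsub⟩ := ih _ hp' (by
        have := hp.length_lt
        simp only [Walk.length_cons]
        omega)
      exact ⟨a, b, q, hq, ha, hb, fun x hx => hsub x (by simp [Walk.support_cons, hx])⟩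

lemma exists_adj' [Fintype V] (hc : G.Connected) (h2 : 2 ≤ Fintype.card V) (v : V) :
    ∃ w, G.Adj v w := by
  obtain ⟨w, hw⟩ := Fintype.exists_ne_of_one_lt_card h2 v
  obtain ⟨p⟩ := hc.preconnected v w
  cases p with
  | nil => exact absurd rfl hw.symm
  | cons h q => exact ⟨_, h⟩

lemma exists_extension [Fintype V] [DecidableRel G.Adj] [DecidableEq V]
    (hT : G.IsTree) (h2 : 2 ≤ Fintype.card V) {u v : V} (p : G.Walk u v)
    (hp : p.IsPath) (hdeg : G.degree u ≠ 1) :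
    ∃ z, ∃ _ : G.Adj z u, z ∉ p.support := by
  have hpos : 0 < G.degree u := by
    obtain ⟨w, hw⟩ := exists_adj' hT.isConnected h2 u
    rw [← card_neighborFinset_eq_degree]
    exact Finset.card_pos.2 ⟨w, by simpa using hw⟩
  have h2d : 1 < (G.neighborFinset u).card := by
    rw [card_neighborFinset_eq_degree]; omega
  obtain ⟨z1, hz1, z2, hz2, hz12⟩ := Finset.one_lt_card.1 h2d
  rw [mem_neighborFinset] at hz1 hz2
  by_contra hcon
  push_neg at hcon
  cases p with
  | nil =>
    have := hcon z1 hz1.symm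
    simp only [Walk.support_nil, List.mem_singleton] at this
    exact G.irrefl (this ▸ hz1)
  | cons h q =>
    rename_i w
    rw [Walk.cons_isPath_iff] at hp
    have key : ∀ z, G.Adj u z → z ∈ (Walk.cons h q).support → z = w := by
      intro z hz hzs
      by_contra hzw
      have hzu : z ≠ u := fun he => G.irrefl (he ▸ hz)
      have hzs' : z ∈ (Walk.cons h q).support := hzs
      set P : G.Walk u _ := Walk.cons h q with hPdef
      have hq' : (P.takeUntil z hzs').IsPath := (hp.1.cons hp.2).takeUntil hzs'
      have hedge : s(z, u) ∉ (P.takeUntil z hzs').edges := by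
        intro hmem
        have := P.edges_takeUntil_subset hzs' hmem
        simp only [hPdef, Walk.edges_cons, List.mem_cons] at this
        rcases this with heq | hin
        · rw [Sym2.eq_iff] at heq
          rcases heq with ⟨h1, h2⟩ | ⟨h1, h2⟩
          · exact hzu h1
          · exact hzw h1
        · exact hp.2 (q.snd_mem_support_of_mem_edges hin)
      have hcyc : (Walk.cons hz.symm (P.takeUntil z hzs')).IsCycle :=
        (Walk.cons_isCycle_iff _ hz.symm).2 ⟨hq', hedge⟩
      exact hT.IsAcyclic _ hcyc
    have e1 : z1 = w := key z1 hz1 (hcon z1 hz1.symm)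
    have e2 : z2 = w := key z2 hz2 (hcon z2 hz2.symm)
    exact hz12 (e1.trans e2.symm)

end TreeAux

section ProdAux
variable {V W : Type*} {T : SimpleGraph V} {G : SimpleGraph W}

lemma dist_le_walk_length_boxProd (hT : T.Connected) (hG : G.Connected) :
    ∀ {x y : V × W} (p : (T □ G).Walk x y),
      T.dist x.1 y.1 + G.dist x.2 y.2 ≤ p.length := by
  intro x y p
  induction p with
  | nil => simp
  | cons h q ih =>
    rename_i a b c
    rcases h with ⟨ha, he⟩ | ⟨ha, he⟩
    · have h1 : T.dist a.1 c.1 ≤ T.dist a.1 b.1 + T.dist b.1 c.1 := hT.dist_triangle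
      have h2 : T.dist a.1 b.1 = 1 := (T.dist_eq_one_iff_adj).2 ha
      have h3 : G.dist a.2 c.2 = G.dist b.2 c.2 := by rw [he]
      show T.dist a.1 c.1 + G.dist a.2 c.2 ≤ q.length + 1
      omega
    · have h1 : G.dist a.2 c.2 ≤ G.dist a.2 b.2 + G.dist b.2 c.2 := hG.dist_triangle
      have h2 : G.dist a.2 b.2 = 1 := (G.dist_eq_one_iff_adj).2 ha
      have h3 : T.dist a.1 c.1 = T.dist b.1 c.1 := by rw [he]
      show T.dist a.1 c.1 + G.dist a.2 c.2 ≤ q.length + 1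
      omega


lemma isPath_append {H : SimpleGraph V} {u v w : V} {p : H.Walk u v} {q : H.Walk v w}
    (hp : p.IsPath) (hq : q.IsPath)
    (hint : ∀ x, x ∈ p.support → x ∈ q.support → x = v) : (p.append q).IsPath := by
  rw [Walk.isPath_def, Walk.support_append]
  apply List.Nodup.append hp.support_nodup
  · have := hq.support_nodup
    rw [q.support_eq_cons] at this
    exact this.of_cons
  · intro x hxp hxq
    have hx : x ∈ q.support := List.mem_of_mem_tail hxq
    have := hint x hxp hx
    subst this
    have := hq.support_nodup
    rw [q.support_eq_cons] at this
    exact (List.nodup_cons.1 this).1 hxq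

lemma mem_boxProdRight_support {b₁ b₂ : W} {a : V} {p : G.Walk b₁ b₂} {x : V × W} :
    x ∈ (Walk.boxProdRight T a p).support ↔ x.1 = a ∧ x.2 ∈ p.support := by
  show x ∈ (p.map (T.boxProdRight G a).toHom).support ↔ _
  rw [Walk.support_map]
  simp only [List.mem_map]
  constructor
  · rintro ⟨y, hy, rfl⟩; exact ⟨rfl, hy⟩
  · rintro ⟨h1, h2⟩; exact ⟨x.2, h2, by ext <;> simp [h1.symm]⟩

lemma mem_boxProdLeft_support {a₁ a₂ : V} {b : W} {p : T.Walk a₁ a₂} {x : V × W} :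
    x ∈ (Walk.boxProdLeft G b p).support ↔ x.1 ∈ p.support ∧ x.2 = b := by
  show x ∈ (p.map (T.boxProdLeft G b).toHom).support ↔ _
  rw [Walk.support_map]
  simp only [List.mem_map]
  constructor
  · rintro ⟨y, hy, rfl⟩; exact ⟨hy, rfl⟩
  · rintro ⟨h1, h2⟩; exact ⟨x.1, h1, by ext <;> simp [h2.symm]⟩

lemma length_boxProdRight' {b₁ b₂ : W} (a : V) (p : G.Walk b₁ b₂) :
    (Walk.boxProdRight T a p).length = p.length := Walk.length_map _ _

lemma length_boxProdLeft' {a₁ a₂ : V} (b : W) (p : T.Walk a₁ a₂) :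
    (Walk.boxProdLeft G b p).length = p.length := Walk.length_map _ _

lemma boxProdRight_isPath {b₁ b₂ : W} (a : V) {p : G.Walk b₁ b₂} (hp : p.IsPath) :
    (Walk.boxProdRight T a p).IsPath :=
  Walk.map_isPath_of_injective (fun _ _ hxy => (T.boxProdRight G a).injective hxy) hp

lemma boxProdLeft_isPath {a₁ a₂ : V} (b : W) {p : T.Walk a₁ a₂} (hp : p.IsPath) :
    (Walk.boxProdLeft G b p).IsPath :=
  Walk.map_isPath_of_injective (fun _ _ hxy => (T.boxProdLeft G b).injective hxy) hp

section canon

variable (pT : ∀ a b : V, T.Walk a b) (pG : ∀ g h : W, G.Walk g h)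
variable (Λ : V × W → V × W → Bool)

def cGf (u v : V × W) : (T □ G).Walk u v :=
  (Walk.boxProdRight T u.1 (pG u.2 v.2)).append (Walk.boxProdLeft G v.2 (pT u.1 v.1))

def cTf (u v : V × W) : (T □ G).Walk u v :=
  (Walk.boxProdLeft G u.2 (pT u.1 v.1)).append (Walk.boxProdRight T v.1 (pG u.2 v.2))

def cc (u v : V × W) : (T □ G).Walk u v :=
  bif Λ u v then cGf pT pG u v else cTf pT pG u v

variable {pT pG}

lemma cGf_isPath (hpT : ∀ a b, (pT a b).IsPath) (hpG : ∀ g h, (pG g h).IsPath)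
    (u v : V × W) : (cGf pT pG u v).IsPath := by
  apply isPath_append (boxProdRight_isPath _ (hpG _ _)) (boxProdLeft_isPath _ (hpT _ _))
  intro x hx1 hx2
  rw [mem_boxProdRight_support] at hx1
  rw [mem_boxProdLeft_support] at hx2
  exact Prod.ext hx1.1 hx2.2

lemma cTf_isPath (hpT : ∀ a b, (pT a b).IsPath) (hpG : ∀ g h, (pG g h).IsPath)
    (u v : V × W) : (cTf pT pG u v).IsPath := by
  apply isPath_append (boxProdLeft_isPath _ (hpT _ _)) (boxProdRight_isPath _ (hpG _ _))
  intro x hx1 hx2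
  rw [mem_boxProdLeft_support] at hx1
  rw [mem_boxProdRight_support] at hx2
  exact Prod.ext hx2.1 hx1.2

lemma cc_isPath (hpT : ∀ a b, (pT a b).IsPath) (hpG : ∀ g h, (pG g h).IsPath)
    (u v : V × W) : (cc pT pG Λ u v).IsPath := by
  unfold cc
  cases Λ u v with
  | true => exact cGf_isPath hpT hpG u v
  | false => exact cTf_isPath hpT hpG u v

lemma cc_length (hlT : ∀ a b, (pT a b).length = T.dist a b)
    (hlG : ∀ g h, (pG g h).length = G.dist g h) (u v : V × W) :
    (cc pT pG Λ u v).length = T.dist u.1 v.1 + G.dist u.2 v.2 := by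
  unfold cc
  cases Λ u v with
  | true =>
    simp only [cond_true, cGf, Walk.length_append, length_boxProdRight', length_boxProdLeft',
      hlT, hlG]
    omega
  | false =>
    simp only [cond_false, cTf, Walk.length_append, length_boxProdRight', length_boxProdLeft',
      hlT, hlG]

lemma mem_cc_support (u v : V × W) {x : V}
    (hx : x ∈ (pT u.1 v.1).support) :
    ((x, if Λ u v = true then v.2 else u.2) : V × W) ∈ (cc pT pG Λ u v).support := by
  unfold cc
  cases hL : Λ u v with
  | true =>
    simp only [cond_true, if_pos rfl, cGf, Walk.mem_support_append_iff]
    right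
    rw [mem_boxProdLeft_support]
    exact ⟨hx, rfl⟩
  | false =>
    simp only [cond_false, Bool.false_eq_true, if_false, cTf, Walk.mem_support_append_iff]
    left
    rw [mem_boxProdLeft_support]
    exact ⟨hx, rfl⟩

end canon

variable (pT : ∀ a b : V, T.Walk a b) (pG : ∀ g h : W, G.Walk g h)
variable (Λ : V × W → V × W → Bool)

def pp [LinearOrder (V × W)] (u v : V × W) : (T □ G).Walk u v :=
  if u ≤ v then cc pT pG Λ u v else (cc pT pG Λ v u).reverse

variable {pT pG}
variable (hpT : ∀ a b, (pT a b).IsPath) (hpG : ∀ g h, (pG g h).IsPath)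
variable (hlT : ∀ a b, (pT a b).length = T.dist a b)
variable (hlG : ∀ g h, (pG g h).length = G.dist g h)

include hlT hlG in
lemma boxProd_dist (hTc : T.Connected) (hGc : G.Connected) (u v : V × W) :
    (T □ G).dist u v = T.dist u.1 v.1 + G.dist u.2 v.2 := by
  refine le_antisymm ?_ ?_
  · have := (T □ G).dist_le (cc pT pG (fun _ _ => true) u v)
    rwa [cc_length (fun _ _ => true) hlT hlG] at this
  · obtain ⟨p, hp, hl⟩ := (hTc.boxProd hGc).exists_path_of_dist u v
    rw [← hl]
    exact dist_le_walk_length_boxProd hTc hGc p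

include hlT hlG in
lemma cc_nil (u : V × W) : cc pT pG Λ u u = Walk.nil := by
  rw [← Walk.nil_iff_eq_nil, Walk.nil_iff_length_eq, cc_length Λ hlT hlG]
  simp

include hpT hpG hlT hlG in
lemma pp_strongGeodeticChoice [LinearOrder (V × W)] (hTc : T.Connected) (hGc : G.Connected) :
    StrongGeodeticChoice (T □ G) (pp pT pG Λ) := by
  intro u v
  have hdist : ∀ u v : V × W, (T □ G).dist u v = T.dist u.1 v.1 + G.dist u.2 v.2 :=
    boxProd_dist hlT hlG hTc hGc
  refine ⟨?_, ?_, ?_⟩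
  · unfold pp
    split
    · exact cc_isPath Λ hpT hpG u v
    · exact (cc_isPath Λ hpT hpG v u).reverse
  · unfold pp
    split
    · rw [cc_length Λ hlT hlG, hdist]
    · rw [Walk.length_reverse, cc_length Λ hlT hlG, hdist, T.dist_comm, G.dist_comm]
  · unfold pp
    rcases eq_or_ne u v with rfl | hne
    · simp only [le_refl, if_pos]
      rw [cc_nil Λ hlT hlG]
      rfl
    · rcases le_total u v with h | h
      · rw [if_pos h, if_neg (fun h' => hne (le_antisymm h h'))]
      · rw [if_pos h, if_neg (fun h' => hne (le_antisymm h' h)), Walk.reverse_reverse]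


end ProdAux
section Assign2
open scoped Classical
variable {V W : Type*} [LinearOrder W]
variable (ι : W × Bool → V) (w₀ : W)

noncomputable def glw (a : V) : W :=
  if h : ∃ wb, ι wb = a then h.choose.1 else w₀

noncomputable def tau (a b : V) : W :=
  if ha : ∃ wb, ι wb = a then
    if hb : ∃ wb, ι wb = b then
      if ha.choose.1 = hb.choose.1 then ha.choose.1
      else if ha.choose.2 = hb.choose.2 then max ha.choose.1 hb.choose.1
      else min ha.choose.1 hb.choose.1
    else ha.choose.1
  else if hb : ∃ wb, ι wb = b then hb.choose.1 else w₀

variable {ι}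

lemma choose_eq_of_inj (hι : Function.Injective ι) {w : W} {s : Bool}
    (h : ∃ wb, ι wb = ι (w, s)) : h.choose = (w, s) := hι h.choose_spec

lemma glw_iota (hι : Function.Injective ι) (w : W) (s : Bool) :
    glw ι w₀ (ι (w, s)) = w := by
  unfold glw
  rw [dif_pos ⟨(w, s), rfl⟩]
  rw [choose_eq_of_inj hι]

lemma tau_symm (a b : V) : tau ι w₀ a b = tau ι w₀ b a := by
  unfold tau
  split_ifs with h1 h2 h3 h4 h5 h6 h7 h8 h9 h10 h11 <;>
    simp_all [max_comm, min_comm]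

lemma tau_iota_pair (hι : Function.Injective ι) (w : W) (s t : Bool) :
    tau ι w₀ (ι (w, s)) (ι (w, t)) = w := by
  unfold tau
  rw [dif_pos ⟨(w, s), rfl⟩, dif_pos ⟨(w, t), rfl⟩, choose_eq_of_inj hι, choose_eq_of_inj hι]
  simp

lemma tau_exists (hι : Function.Injective ι) {a : V} {w : W}
    (hga : glw ι w₀ a ≠ w) : ∃ t : Bool, tau ι w₀ a (ι (w, t)) = w := by
  unfold tau
  by_cases ha : ∃ wb, ι wb = a
  · have hchoose : ha.choose.1 = glw ι w₀ a := by
      unfold glw; rw [dif_pos ha]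
    rcases lt_or_gt_of_ne (hchoose ▸ hga) with hlt | hgt
    · refine ⟨ha.choose.2, ?_⟩
      rw [dif_pos ha, dif_pos ⟨(w, ha.choose.2), rfl⟩, choose_eq_of_inj hι]
      rw [if_neg (by simpa using ne_of_lt hlt), if_pos rfl]
      exact max_eq_right (le_of_lt hlt)
    · refine ⟨!ha.choose.2, ?_⟩
      rw [dif_pos ha, dif_pos ⟨(w, !ha.choose.2), rfl⟩, choose_eq_of_inj hι]
      rw [if_neg (by simpa using ne_of_gt hgt), if_neg (by simp), min_eq_right (le_of_lt hgt)]
  · exact ⟨false, by rw [dif_neg ha, dif_pos ⟨(w, false), rfl⟩, choose_eq_of_inj hι]⟩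

lemma layer_eq {w a2 b2 t : W} (h1 : w = a2 ∨ w = b2) (h2 : t = w ∨ a2 = b2) :
    (if decide (t = b2) = true then b2 else a2) = w := by
  split_ifs with h
  · rw [decide_eq_true_eq] at h
    rcases h2 with rfl | rfl
    · exact h.symm
    · rcases h1 with rfl | rfl <;> rfl
  · rw [decide_eq_true_eq] at h
    rcases h2 with rfl | rfl
    · rcases h1 with rfl | rfl
      · rfl
      · exact absurd rfl h
    · rcases h1 with rfl | rfl <;> rfl

end Assign2

section CoverPair
open scoped Classical
variable {V W : Type*} {T : SimpleGraph V} {G : SimpleGraph W}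

lemma mem_tpath_symm (hT : T.IsTree) {a b x : V} (hx : x ∈ (tpath hT a b).support) :
    x ∈ (tpath hT b a).support := by
  rw [tpath_reverse hT, Walk.support_reverse]
  exact List.mem_reverse.2 hx

lemma cover_pair [LinearOrder W] [LinearOrder (V × W)] (hT : T.IsTree)
    (pG : ∀ g h : W, G.Walk g h) (ι : W × Bool → V) (w₀ : W)
    {x : V} {w : W} (s s' : V × W)
    (hx : x ∈ (tpath hT s.1 s'.1).support)
    (h1 : w = s.2 ∨ w = s'.2)
    (h2 : tau ι w₀ s.1 s'.1 = w ∨ s.2 = s'.2) :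
    ∃ u v, (u = s ∨ u = s') ∧ (v = s ∨ v = s') ∧
      (x, w) ∈ (pp (tpath hT) pG
        (fun u v => decide (tau ι w₀ u.1 v.1 = v.2)) u v).support := by
  rcases le_total s s' with h | h
  · refine ⟨s, s', Or.inl rfl, Or.inr rfl, ?_⟩
    have hm := mem_cc_support (pT := tpath hT) (pG := pG)
      (fun u v => decide (tau ι w₀ u.1 v.1 = v.2)) s s' hx
    rw [layer_eq h1 h2] at hm
    unfold pp
    rw [if_pos h]
    exact hm
  · refine ⟨s', s, Or.inr rfl, Or.inl rfl, ?_⟩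
    have hm := mem_cc_support (pT := tpath hT) (pG := pG)
      (fun u v => decide (tau ι w₀ u.1 v.1 = v.2)) s' s (mem_tpath_symm hT hx)
    rw [layer_eq (h1.symm) (h2.imp (fun hh => (tau_symm w₀ s'.1 s.1).trans hh) Eq.symm)] at hm
    unfold pp
    rw [if_pos h]
    exact hm

end CoverPair


section TreeCover
variable {V : Type*} {G : SimpleGraph V}

lemma leaves_cover [Fintype V] [DecidableRel G.Adj] [DecidableEq V]
    (hT : G.IsTree) (h2 : 2 ≤ Fintype.card V) (x : V) :
    ∃ a b, G.degree a = 1 ∧ G.degree b = 1 ∧ x ∈ (tpath hT a b).support := by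
  obtain ⟨a, b, q, hq, ha, hb, hsub⟩ :=
    extend_to_leaves hT h2 (fun p hp hd => exists_extension hT h2 p hp hd)
      (Fintype.card V) (Walk.nil : G.Walk x x) Walk.IsPath.nil (by simp)
  exact ⟨a, b, ha, hb, (tpath_eq hT hq) ▸ hsub x (by simp)⟩

end TreeCover

theorem stmt15 {V W : Type*} [Fintype V] [Fintype W]
    (T : SimpleGraph V) [DecidableRel T.Adj] (hT : T.IsTree)
    (h3 : 3 ≤ Fintype.card V)
    (G : SimpleGraph W) (hG : G.Connected)
    (hl : 2 * Fintype.card W ≤ ({v : V | T.degree v = 1} : Set V).ncard) :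
    sg (T □ G) = ({v : V | T.degree v = 1} : Set V).ncard ∧
    sg T = ({v : V | T.degree v = 1} : Set V).ncard := by
  classical
  letI : LinearOrder W := LinearOrder.lift' (Fintype.equivFin W) (Equiv.injective _)
  letI : LinearOrder (V × W) := LinearOrder.lift' (Fintype.equivFin (V × W)) (Equiv.injective _)
  have hTc : T.Connected := hT.isConnected
  have h2V : 2 ≤ Fintype.card V := by omega
  set L : Set V := {v : V | T.degree v = 1} with hLdef
  have hpT_path : ∀ a b : V, (tpath hT a b).IsPath := tpath_isPath hT
  have hpT_len : ∀ a b : V, (tpath hT a b).length = T.dist a b := tpath_length hT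
  have hchoiceT : StrongGeodeticChoice T (tpath hT) := fun u v =>
    ⟨hpT_path u v, hpT_len u v, tpath_reverse hT u v⟩
  have hcoverT := leaves_cover hT h2V
  have hSGS_T : IsStrongGeodeticSet T L := by
    refine ⟨tpath hT, hchoiceT, fun x => ?_⟩
    obtain ⟨a, b, ha, hb, hx⟩ := hcoverT x
    exact ⟨a, ha, b, hb, hx⟩
  have hLsub : ∀ S : Set V, IsStrongGeodeticSet T S → L ⊆ S := by
    rintro S ⟨q, hc, hcov⟩ l hl'
    obtain ⟨u, hu, v, hv, hmem⟩ := hcov l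
    rcases leaf_mem_geodesic_endpoint hTc hl' (hc u v).2.1 hmem with rfl | rfl
    exacts [hu, hv]
  have hsgT : sg T = L.ncard := by
    apply le_antisymm
    · exact Nat.sInf_le ⟨L, rfl, hSGS_T⟩
    · refine le_csInf ⟨L.ncard, L, rfl, hSGS_T⟩ ?_
      rintro n ⟨S, rfl, hS⟩
      exact Set.ncard_le_ncard (hLsub S hS) S.toFinite
  refine ⟨?_, hsgT⟩
  -- product part
  have hNW : Nonempty W := hG.nonempty
  obtain ⟨w₀⟩ := hNW
  have hcardL : L.ncard = Fintype.card L := by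
    rw [Set.ncard_eq_toFinset_card', Set.toFinset_card]
  have hcard : Fintype.card (W × Bool) ≤ Fintype.card L := by
    rw [Fintype.card_prod, Fintype.card_bool]
    omega
  obtain ⟨e⟩ : Nonempty (W × Bool ↪ L) := Function.Embedding.nonempty_of_card_le hcard
  set ι : W × Bool → V := fun wb => (e wb : V) with hιdef
  have hι : Function.Injective ι := fun a b hab => e.injective (Subtype.ext hab)
  have hιL : ∀ wb, ι wb ∈ L := fun wb => (e wb).2
  have hGW : ∀ g h : W, ∃ p : G.Walk g h, p.IsPath ∧ p.length = G.dist g h :=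
    fun g h => hG.exists_path_of_dist g h
  set pG : ∀ g h : W, G.Walk g h := fun g h => (hGW g h).choose with hpGdef
  have hpG_path : ∀ g h, (pG g h).IsPath := fun g h => (hGW g h).choose_spec.1
  have hpG_len : ∀ g h, (pG g h).length = G.dist g h := fun g h => (hGW g h).choose_spec.2
  set P := pp (tpath hT) pG (fun u v => decide (tau ι w₀ u.1 v.1 = v.2)) with hPdef
  have hchoiceP : StrongGeodeticChoice (T □ G) P :=
    pp_strongGeodeticChoice _ hpT_path hpG_path hpT_len hpG_len hTc hG
  have hdist := boxProd_dist (T := T) (G := G) hpT_len hpG_len hTc hG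
  set S : Set (V × W) := (fun a => (a, glw ι w₀ a)) '' L with hSdef
  have hglι : ∀ (w : W) (t : Bool), glw ι w₀ (ι (w, t)) = w := fun w t => glw_iota w₀ hι w t
  have hmemS : ∀ (w : W) (t : Bool), ((ι (w, t), w) : V × W) ∈ S := by
    intro w t
    refine ⟨ι (w, t), hιL _, ?_⟩
    show (ι (w, t), glw ι w₀ (ι (w, t))) = (ι (w, t), w)
    rw [hglι]
  have hmemS' : ∀ a ∈ L, ((a, glw ι w₀ a) : V × W) ∈ S := fun a ha => ⟨a, ha, rfl⟩
  have hcov : ∀ z : V × W, ∃ u ∈ S, ∃ v ∈ S, z ∈ (P u v).support := by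
    rintro ⟨x, w⟩
    obtain ⟨a, b, ha, hb, hx⟩ := hcoverT x
    have step1 : ∃ a', T.degree a' = 1 ∧ x ∈ (tpath hT a' (ι (w, false))).support := by
      rcases tpath_median hT (ι (w, false)) hx with h | h
      · exact ⟨a, ha, h⟩
      · exact ⟨b, hb, mem_tpath_symm hT h⟩
    obtain ⟨a', ha', hx1⟩ := step1
    have finish : ∀ (s s' : V × W), s ∈ S → s' ∈ S →
        x ∈ (tpath hT s.1 s'.1).support → (w = s.2 ∨ w = s'.2) →
        (tau ι w₀ s.1 s'.1 = w ∨ s.2 = s'.2) →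
        ∃ u ∈ S, ∃ v ∈ S, ((x, w) : V × W) ∈ (P u v).support := by
      intro s s' hs hs' hxx h1 h2
      obtain ⟨u, v, hu, hv, hm⟩ := cover_pair hT pG ι w₀ s s' hxx h1 h2
      refine ⟨u, ?_, v, ?_, hm⟩
      · rcases hu with rfl | rfl
        exacts [hs, hs']
      · rcases hv with rfl | rfl
        exacts [hs, hs']
    rcases tpath_median hT (ι (w, true)) hx1 with hx2 | hx2
    swap
    · -- x between the two designated leaves
      exact finish (ι (w, true), w) (ι (w, false), w) (hmemS w true) (hmemS w false)
        hx2 (Or.inl rfl) (Or.inr rfl)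
    by_cases hac1 : a' = ι (w, false)
    · exact finish (ι (w, false), w) (ι (w, true), w) (hmemS w false) (hmemS w true)
        (hac1 ▸ hx2) (Or.inl rfl) (Or.inr rfl)
    by_cases hac2 : a' = ι (w, true)
    · exact finish (ι (w, true), w) (ι (w, false), w) (hmemS w true) (hmemS w false)
        (hac2 ▸ hx1) (Or.inl rfl) (Or.inr rfl)
    by_cases hga : glw ι w₀ a' = w
    · exact finish (a', glw ι w₀ a') (ι (w, false), w) (hmemS' a' ha') (hmemS w false)
        hx1 (Or.inl hga.symm) (Or.inr hga)
    · obtain ⟨t, ht⟩ := tau_exists w₀ hι hga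
      have hxt : x ∈ (tpath hT a' (ι (w, t))).support := by
        cases t
        · exact hx1
        · exact hx2
      exact finish (a', glw ι w₀ a') (ι (w, t), w) (hmemS' a' ha') (hmemS w t)
        hxt (Or.inr rfl) (Or.inl ht)
  have hSGS_P : IsStrongGeodeticSet (T □ G) S := ⟨P, hchoiceP, hcov⟩
  have hncardS : S.ncard = L.ncard :=
    Set.ncard_image_of_injOn (fun a _ b _ hab => congrArg Prod.fst hab)
  have hlower : ∀ S' : Set (V × W), IsStrongGeodeticSet (T □ G) S' → L.ncard ≤ S'.ncard := by
    rintro S' ⟨q, hc, hcov'⟩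
    have hex : ∀ l ∈ L, ∃ s, s ∈ S' ∧ s.1 = l := by
      intro l hl'
      obtain ⟨u, hu, v, hv, hmem⟩ := hcov' (l, w₀)
      have hlen := (hc u v).2.1
      have hsp := (q u v).take_spec hmem
      have d1 := (T □ G).dist_le ((q u v).takeUntil _ hmem)
      have d2 := (T □ G).dist_le ((q u v).dropUntil _ hmem)
      have hsum : ((q u v).takeUntil _ hmem).length + ((q u v).dropUntil _ hmem).length
          = (q u v).length := by
        rw [← Walk.length_append, hsp]
      rw [hdist] at hlen
      rw [hdist] at d1 d2
      simp only at hlen d1 d2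
      have htriT : T.dist u.1 v.1 ≤ T.dist u.1 l + T.dist l v.1 := hTc.dist_triangle
      have htriG : G.dist u.2 v.2 ≤ G.dist u.2 w₀ + G.dist w₀ v.2 := hG.dist_triangle
      have heq : T.dist u.1 v.1 = T.dist u.1 l + T.dist l v.1 := by omega
      by_cases h1 : u.1 = l
      · exact ⟨u, hu, h1⟩
      by_cases h2 : v.1 = l
      · exact ⟨v, hv, h2⟩
      exact absurd heq (fun heq' => leaf_not_between hTc hl' h1 h2 heq')
    set f : V → V × W := fun l => if h : l ∈ L then (hex l h).choose else (l, w₀) with hfdef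
    apply Set.ncard_le_ncard_of_injOn f
    · intro a haL
      simp only [hfdef]
      rw [dif_pos haL]
      exact (hex a haL).choose_spec.1
    · intro a haL b hbL hab
      have ha1 : (f a).1 = a := by
        simp only [hfdef]; rw [dif_pos haL]; exact (hex a haL).choose_spec.2
      have hb1 : (f b).1 = b := by
        simp only [hfdef]; rw [dif_pos hbL]; exact (hex b hbL).choose_spec.2
      calc a = (f a).1 := ha1.symm
        _ = (f b).1 := by rw [hab]
        _ = b := hb1
  apply le_antisymm
  · exact Nat.sInf_le ⟨S, hncardS, hSGS_P⟩
  · refine le_csInf ⟨L.ncard, S, hncardS, hSGS_P⟩ ?_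
    rintro n ⟨S', rfl, hS'⟩
    exact hlower S' hS'
end
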